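/- arXiv:1907.09994 — 2 statements merged into one kernel-verified Lean document; each statement's English description precedes it below -/
import Mathlib

section
/- For every k ≥ 1 there is a graph G of tree-width k with pn_ℓ(G) ≥ k (hence also pn_u(G) ≥ k). -/
open SimpleGraph

/-- Two edges `e₁ = s(a,c)` and `e₂ = s(b,d)` cross with respect to the spine
position function `pos` if `a ≺ b ≺ c ≺ d`. -/
def Crosses {V : Type*} (pos : V → ℕ) (e₁ e₂ : Sym2 V) : Prop :=
  ∃ a b c d : V, e₁ = s(a, c) ∧ e₂ = s(b, d) ∧
    pos a < pos b ∧ pos b < pos c ∧ pos c < pos d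

/-- A linear embedding of `G`: an (injective) spine position function together with
an assignment of edges to pages (indexed by naturals). -/
structure LinearEmbedding {V : Type*} (G : SimpleGraph V) where
  pos : V → ℕ
  inj : Function.Injective pos
  page : Sym2 V → ℕ

namespace LinearEmbedding

variable {V : Type*} {G : SimpleGraph V} (L : LinearEmbedding G)

/-- The set of indices of nonempty pages. -/
def pages : Set ℕ := {i | ∃ e ∈ G.edgeSet, L.page e = i}

/-- The number of (nonempty) pages. -/
noncomputable def pageCount : ℕ := L.pages.ncard

/-- The set of pages having an edge incident to `v`. -/
def pagesAt (v : V) : Set ℕ := {i | ∃ e ∈ G.edgeSet, v ∈ e ∧ L.page e = i}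

/-- The subgraph of `G` formed by the edges on page `i`. -/
def pageGraph (i : ℕ) : SimpleGraph V :=
  fromEdgeSet {e | e ∈ G.edgeSet ∧ L.page e = i}

/-- The set of vertices incident to an edge on page `i`. -/
def pageVerts (i : ℕ) : Set V := {v | ∃ e ∈ G.edgeSet, L.page e = i ∧ v ∈ e}

/-- The set of edges on page `i`. -/
def pageEdges (i : ℕ) : Set (Sym2 V) := {e | e ∈ G.edgeSet ∧ L.page e = i}

/-- A book embedding: no two edges on a common page cross. -/
def IsBook : Prop :=
  ∀ e₁ ∈ G.edgeSet, ∀ e₂ ∈ G.edgeSet, L.page e₁ = L.page e₂ → ¬ Crosses L.pos e₁ e₂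

/-- A `k`-local embedding: every vertex has incident edges on at most `k` pages. -/
noncomputable def IsLocal (k : ℕ) : Prop := ∀ v : V, (L.pagesAt v).ncard ≤ k

/-- A union embedding: any two edges lying on the same page and in the same
connected component of that page do not cross. -/
def IsUnion : Prop :=
  ∀ e₁ ∈ G.edgeSet, ∀ e₂ ∈ G.edgeSet, L.page e₁ = L.page e₂ →
    (∃ u v, u ∈ e₁ ∧ v ∈ e₂ ∧ (L.pageGraph (L.page e₁)).Reachable u v) →
    ¬ Crosses L.pos e₁ e₂

/-- A forest embedding: the edges of each page form a forest. -/
def IsForestEmbedding : Prop := ∀ i : ℕ, (L.pageGraph i).IsAcyclic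

end LinearEmbedding

/-- The (classical) page number of `G`. -/
noncomputable def pn {V : Type*} (G : SimpleGraph V) : ℕ :=
  sInf {k | ∃ L : LinearEmbedding G, L.IsBook ∧ L.pageCount ≤ k}

/-- The local page number of `G`. -/
noncomputable def pnLoc {V : Type*} (G : SimpleGraph V) : ℕ :=
  sInf {k | ∃ L : LinearEmbedding G, L.IsBook ∧ L.IsLocal k}

/-- The union page number of `G`. -/
noncomputable def pnUnion {V : Type*} (G : SimpleGraph V) : ℕ :=
  sInf {k | ∃ L : LinearEmbedding G, L.IsUnion ∧ L.pageCount ≤ k}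

/-- `IsKTree k G s`: the graph `G`, whose edges all lie inside the vertex set `s`,
is a `k`-tree on vertex set `s`. -/
inductive IsKTree {V : Type*} [DecidableEq V] (k : ℕ) : SimpleGraph V → Finset V → Prop
  | base (G : SimpleGraph V) (s : Finset V) (hcard : s.card = k + 1)
      (hadj : ∀ a b, G.Adj a b ↔ (a ∈ s ∧ b ∈ s ∧ a ≠ b)) :
      IsKTree k G s
  | extend (G G' : SimpleGraph V) (s c : Finset V) (v : V)
      (hG : IsKTree k G s) (hv : v ∉ s) (hc : c ⊆ s) (hcard : c.card = k)
      (hclique : ∀ a ∈ c, ∀ b ∈ c, a ≠ b → G.Adj a b)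
      (hG' : ∀ a b, G'.Adj a b ↔
        (G.Adj a b ∨ (a = v ∧ b ∈ c) ∨ (b = v ∧ a ∈ c))) :
      IsKTree k G' (insert v s)

section AuxPn

private lemma not_crosses_self {V : Type*} {pos : V → ℕ} (e : Sym2 V) :
    ¬ Crosses pos e e := by
  rintro ⟨x, y, z, w, h1, h2, hxy, hyz, hzw⟩
  rw [h1, Sym2.eq_iff] at h2
  rcases h2 with ⟨rfl, rfl⟩ | ⟨rfl, rfl⟩
  · exact lt_irrefl _ hxy
  · exact lt_irrefl _ (hxy.trans (hyz.trans hzw))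

private lemma pagesAt_finite {V : Type*} [Finite (Sym2 V)] {G : SimpleGraph V}
    (L : LinearEmbedding G) (v : V) : (L.pagesAt v).Finite := by
  apply (Set.finite_range L.page).subset
  rintro i ⟨e, -, -, h⟩
  exact ⟨e, h⟩

private lemma pages_finite {V : Type*} [Finite (Sym2 V)] {G : SimpleGraph V}
    (L : LinearEmbedding G) : L.pages.Finite := by
  apply (Set.finite_range L.page).subset
  rintro i ⟨e, -, h⟩
  exact ⟨e, h⟩

/-- The `k`-tree used for the lower bound: a clique on the first `k` vertices,
and `m` further vertices each adjacent to the whole clique. -/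
private def KT (k m : ℕ) : SimpleGraph (Fin (k + m)) where
  Adj a b := a ≠ b ∧ (a.val < k ∨ b.val < k)
  symm := by constructor; rintro a b ⟨h1, h2⟩; exact ⟨h1.symm, h2.symm⟩
  loopless := by constructor; rintro a ⟨h, -⟩; exact h rfl

private lemma KT_adj {k m : ℕ} {a b : Fin (k + m)} :
    (KT k m).Adj a b ↔ a ≠ b ∧ (a.val < k ∨ b.val < k) := Iff.rfl

private def KTstage (k m t : ℕ) : SimpleGraph (Fin (k + m)) where
  Adj a b := a ≠ b ∧ a.val < k + 1 + t ∧ b.val < k + 1 + t ∧ (a.val < k ∨ b.val < k)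
  symm := by constructor; rintro a b ⟨h1, h2, h3, h4⟩; exact ⟨h1.symm, h3, h2, h4.symm⟩
  loopless := by constructor; rintro a ⟨h, -⟩; exact h rfl

private lemma KTstage_adj {k m t : ℕ} {a b : Fin (k + m)} :
    (KTstage k m t).Adj a b ↔
      a ≠ b ∧ a.val < k + 1 + t ∧ b.val < k + 1 + t ∧ (a.val < k ∨ b.val < k) := Iff.rfl

private lemma card_filter_val_lt (N j : ℕ) (h : j ≤ N) :
    ((Finset.univ : Finset (Fin N)).filter (fun v => v.val < j)).card = j := by
  have he : (Finset.univ : Finset (Fin N)).filter (fun v => v.val < j) =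
      Finset.attachFin (Finset.range j)
        (fun x hx => lt_of_lt_of_le (Finset.mem_range.mp hx) h) := by
    ext v
    simp [Finset.mem_attachFin]
  rw [he, Finset.card_attachFin, Finset.card_range]

private lemma stage_isKTree (k m : ℕ) :
    ∀ t, t < m → IsKTree k (KTstage k m t)
      ((Finset.univ : Finset (Fin (k + m))).filter (fun v => v.val < k + 1 + t)) := by
  intro t
  induction t with
  | zero =>
    intro h0
    apply IsKTree.base
    · exact card_filter_val_lt _ _ (by omega)
    · intro a b
      rw [KTstage_adj]
      simp only [Finset.mem_filter, Finset.mem_univ, true_and]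
      constructor
      · rintro ⟨h1, h2, h3, -⟩; exact ⟨h2, h3, h1⟩
      · rintro ⟨h1, h2, h3⟩
        have hv : a.val ≠ b.val := fun hv => h3 (Fin.ext hv)
        exact ⟨h3, h1, h2, by omega⟩
  | succ t ih =>
    intro hlt
    have hprev := ih (by omega)
    have hvlt : k + 1 + t < k + m := by omega
    set v : Fin (k + m) := ⟨k + 1 + t, hvlt⟩ with hv
    have hins : (Finset.univ : Finset (Fin (k + m))).filter (fun w => w.val < k + 1 + (t + 1)) =
        insert v ((Finset.univ : Finset (Fin (k + m))).filter (fun w => w.val < k + 1 + t)) := by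
      ext w
      simp only [Finset.mem_filter, Finset.mem_univ, true_and, Finset.mem_insert, hv,
        Fin.ext_iff]
      omega
    rw [hins]
    refine IsKTree.extend (KTstage k m t) (KTstage k m (t + 1)) _
      ((Finset.univ : Finset (Fin (k + m))).filter (fun w => w.val < k)) v hprev ?_ ?_ ?_ ?_ ?_
    · simp [hv]
    · intro w hw
      simp only [Finset.mem_filter, Finset.mem_univ, true_and] at hw ⊢
      omega
    · exact card_filter_val_lt _ _ (by omega)
    · intro a ha b hb hne
      simp only [Finset.mem_filter, Finset.mem_univ, true_and] at ha hb
      exact ⟨hne, by omega, by omega, Or.inl ha⟩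
    · intro a b
      rw [KTstage_adj, KTstage_adj]
      simp only [Finset.mem_filter, Finset.mem_univ, true_and, hv, Fin.ext_iff, ne_eq,
        Fin.val_mk]
      omega

private lemma KT_isKTree (k m : ℕ) (hm : 1 ≤ m) : IsKTree k (KT k m) Finset.univ := by
  have h := stage_isKTree k m (m - 1) (by omega)
  have hG : KTstage k m (m - 1) = KT k m := by
    apply SimpleGraph.ext
    ext a b
    rw [KTstage_adj, KT_adj]
    have ha := a.isLt
    have hb := b.isLt
    constructor
    · rintro ⟨h1, -, -, h4⟩; exact ⟨h1, h4⟩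
    · rintro ⟨h1, h4⟩; exact ⟨h1, by omega, by omega, h4⟩
  have hS : ((Finset.univ : Finset (Fin (k + m))).filter (fun v => v.val < k + 1 + (m - 1))) =
      Finset.univ := by
    ext w
    simp only [Finset.mem_filter, Finset.mem_univ, true_and, iff_true]
    have := w.isLt
    omega
  rwa [hG, hS] at h

private lemma sameRegionDisj {pa pb pu pw : ℕ} (hab : pa < pb)
    (hu1 : pu ≠ pa) (hu2 : pu ≠ pb) (hw1 : pw ≠ pa) (hw2 : pw ≠ pb)
    (h : (if pu < pa then (0 : ℕ) else if pu < pb then 1 else 2) =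
      (if pw < pa then (0 : ℕ) else if pw < pb then 1 else 2)) :
    (pu < pa ∧ pw < pa) ∨ (pa < pu ∧ pu < pb ∧ pa < pw ∧ pw < pb) ∨
      (pb < pu ∧ pb < pw) := by
  split_ifs at h <;> omega

private lemma cross_pair {V : Type*} (pos : V → ℕ) (a b u w : V)
    (hab : pos a < pos b) (huw : pos u ≠ pos w)
    (hreg : (pos u < pos a ∧ pos w < pos a) ∨
      (pos a < pos u ∧ pos u < pos b ∧ pos a < pos w ∧ pos w < pos b) ∨
      (pos b < pos u ∧ pos b < pos w)) :
    ∃ u' w' p q : V, (u' = u ∨ u' = w) ∧ (w' = u ∨ w' = w) ∧ (p = a ∨ p = b) ∧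
      (q = a ∨ q = b) ∧ Crosses pos s(u', p) s(w', q) := by
  rcases hreg with ⟨h1, h2⟩ | ⟨h1, h2, h3, h4⟩ | ⟨h1, h2⟩
  · rcases huw.lt_or_gt with h | h
    · exact ⟨u, w, a, b, .inl rfl, .inr rfl, .inl rfl, .inr rfl,
        u, w, a, b, rfl, rfl, h, h2, hab⟩
    · exact ⟨w, u, a, b, .inr rfl, .inl rfl, .inl rfl, .inr rfl,
        w, u, a, b, rfl, rfl, h, h1, hab⟩
  · rcases huw.lt_or_gt with h | h
    · exact ⟨w, u, a, b, .inr rfl, .inl rfl, .inl rfl, .inr rfl,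
        a, u, w, b, Sym2.eq_swap, rfl, h1, h, h4⟩
    · exact ⟨u, w, a, b, .inl rfl, .inr rfl, .inl rfl, .inr rfl,
        a, w, u, b, Sym2.eq_swap, rfl, h3, h, h2⟩
  · rcases huw.lt_or_gt with h | h
    · exact ⟨u, w, a, b, .inl rfl, .inr rfl, .inl rfl, .inr rfl,
        a, b, u, w, Sym2.eq_swap, Sym2.eq_swap, hab, h1, h⟩
    · exact ⟨w, u, a, b, .inr rfl, .inl rfl, .inl rfl, .inr rfl,
        a, b, w, u, Sym2.eq_swap, Sym2.eq_swap, hab, h2, h⟩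

end AuxPn

section CorePn

private lemma core_contradiction {k m : ℕ} (hk : 1 ≤ k) (hm : 3 * k ^ 4 < m)
    (L : LinearEmbedding (KT k m))
    (hU : ∀ e₁ ∈ (KT k m).edgeSet, ∀ e₂ ∈ (KT k m).edgeSet, L.page e₁ = L.page e₂ →
      (∃ u v, u ∈ e₁ ∧ v ∈ e₂ ∧ (L.pageGraph (L.page e₁)).Reachable u v) →
      ¬ Crosses L.pos e₁ e₂)
    (hloc : ∀ v, (L.pagesAt v).ncard ≤ k - 1) : False := by
  classical
  have hkm : ∀ i : Fin k, (i : ℕ) < k + m := fun i => by have := i.isLt; omega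
  set c : Fin k → Fin (k + m) := fun i => ⟨i, hkm i⟩ with hcdef
  have hcval : ∀ i : Fin k, (c i).val = i := fun i => rfl
  have hedge : ∀ (u : Fin (k + m)) (i : Fin k), k ≤ u.val →
      s(u, c i) ∈ (KT k m).edgeSet := by
    intro u i hu
    rw [SimpleGraph.mem_edgeSet, KT_adj]
    constructor
    · intro h
      have := congrArg Fin.val h
      rw [hcval] at this
      have := i.isLt
      omega
    · exact Or.inr (by rw [hcval]; exact i.isLt)
  have hfinAt : ∀ v, (L.pagesAt v).Finite := pagesAt_finite L
  -- every apex has two clique-edges on a common page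
  have hex : ∀ u : Fin (k + m), k ≤ u.val →
      ∃ ij : Fin k × Fin k, ij.1 ≠ ij.2 ∧ L.page s(u, c ij.1) = L.page s(u, c ij.2) := by
    intro u hu
    have hmap : ∀ i : Fin k, i ∈ (Finset.univ : Finset (Fin k)) →
        L.page s(u, c i) ∈ (hfinAt u).toFinset := by
      intro i _
      rw [Set.Finite.mem_toFinset]
      exact ⟨s(u, c i), hedge u i hu, by simp, rfl⟩
    have hcard : (hfinAt u).toFinset.card < (Finset.univ : Finset (Fin k)).card := by
      rw [← Set.ncard_eq_toFinset_card _ (hfinAt u), Finset.card_univ, Fintype.card_fin]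
      have := hloc u
      omega
    obtain ⟨i, -, j, -, hne, heq⟩ :=
      Finset.exists_ne_map_eq_of_card_lt_of_maps_to hcard hmap
    exact ⟨(i, j), hne, heq⟩
  -- the choice function
  set F : Fin (k + m) → Fin k × Fin k × ℕ := fun u =>
    if h : ∃ ij : Fin k × Fin k, ij.1 ≠ ij.2 ∧
        L.page s(u, c ij.1) = L.page s(u, c ij.2) then
      (h.choose.1, h.choose.2, L.page s(u, c h.choose.1))
    else (⟨0, hk⟩, ⟨0, hk⟩, 0) with hF
  set P : Finset ℕ := Finset.univ.biUnion (fun i : Fin k => (hfinAt (c i)).toFinset) with hP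
  have hPcard : P.card ≤ k * (k - 1) := by
    refine le_trans Finset.card_biUnion_le ?_
    calc ∑ i : Fin k, (hfinAt (c i)).toFinset.card
        ≤ ∑ _i : Fin k, (k - 1) := by
          refine Finset.sum_le_sum fun i _ => ?_
          rw [← Set.ncard_eq_toFinset_card _ (hfinAt (c i))]
          exact hloc (c i)
      _ = k * (k - 1) := by
          rw [Finset.sum_const, Finset.card_univ, Fintype.card_fin, smul_eq_mul]
  set T : Finset (Fin k × Fin k × ℕ) := Finset.univ ×ˢ Finset.univ ×ˢ P with hT
  set S : Finset (Fin (k + m)) :=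
    Finset.univ.image (fun j : Fin m => (⟨k + j.val, by have := j.isLt; omega⟩ : Fin (k + m))) with hS
  have hScard : S.card = m := by
    rw [hS, Finset.card_image_of_injective _ (fun j₁ j₂ h => by
      have := congrArg Fin.val h
      simp only [Fin.val_mk] at this
      exact Fin.ext (by omega)), Finset.card_univ, Fintype.card_fin]
  have hSapex : ∀ u ∈ S, k ≤ u.val := by
    intro u hu
    obtain ⟨j, -, rfl⟩ := Finset.mem_image.mp hu
    simp
  have hmapsto : ∀ u ∈ S, F u ∈ T := by
    intro u hu
    have h := hex u (hSapex u hu)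
    rw [hF]
    simp only []
    rw [dif_pos h]
    refine Finset.mem_product.mpr ⟨Finset.mem_univ _, Finset.mem_product.mpr
      ⟨Finset.mem_univ _, ?_⟩⟩
    refine Finset.mem_biUnion.mpr ⟨h.choose.1, Finset.mem_univ _, ?_⟩
    rw [Set.Finite.mem_toFinset]
    exact ⟨s(u, c h.choose.1), hedge u _ (hSapex u hu), by simp, rfl⟩
  have hbig : T.card * 3 < S.card := by
    have hTcard : T.card ≤ k * (k * (k * (k - 1))) := by
      rw [hT, Finset.card_product, Finset.card_product, Finset.card_univ, Fintype.card_fin]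
      exact Nat.mul_le_mul_left _ (Nat.mul_le_mul_left _ hPcard)
    have h4 : k * (k * (k * (k - 1))) ≤ k ^ 4 := by
      have h1 : k - 1 ≤ k := Nat.sub_le _ _
      calc k * (k * (k * (k - 1))) ≤ k * (k * (k * k)) :=
            Nat.mul_le_mul_left _ (Nat.mul_le_mul_left _ (Nat.mul_le_mul_left _ h1))
        _ = k ^ 4 := by ring
    rw [hScard]
    omega
  obtain ⟨⟨i₀, j₀, p₀⟩, -, hfib⟩ :=
    Finset.exists_lt_card_fiber_of_mul_lt_card_of_maps_to hmapsto hbig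
  set fib := S.filter (fun x => F x = (i₀, j₀, p₀)) with hfibdef
  -- membership facts
  have hfact : ∀ u ∈ fib, k ≤ u.val ∧ i₀ ≠ j₀ ∧
      L.page s(u, c i₀) = p₀ ∧ L.page s(u, c j₀) = p₀ := by
    intro u hu
    obtain ⟨huS, hFu⟩ := Finset.mem_filter.mp hu
    have hap := hSapex u huS
    have h := hex u hap
    rw [hF] at hFu
    simp only [] at hFu
    rw [dif_pos h] at hFu
    have h1 : h.choose.1 = i₀ := congrArg (fun x => x.1) hFu
    have h2 : h.choose.2 = j₀ := congrArg (fun x => x.2.1) hFu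
    have h3 : L.page s(u, c h.choose.1) = p₀ := congrArg (fun x => x.2.2) hFu
    obtain ⟨hne, heq⟩ := h.choose_spec
    refine ⟨hap, by rw [← h1, ← h2]; exact hne, by rw [← h1]; exact h3, ?_⟩
    rw [← h2, ← heq, h1, ← h1]
    exact h3
  -- extract four distinct members of the fiber
  have hfib1 : fib.Nonempty := Finset.card_pos.mp (by omega)
  obtain ⟨u₁, hu₁⟩ := hfib1
  have hfib2 : 2 < (fib.erase u₁).card := by
    rw [Finset.card_erase_of_mem hu₁]; omega
  obtain ⟨u₂, hu₂e, u₃, hu₃e, u₄, hu₄e, h23, h24, h34⟩ := Finset.two_lt_card.mp hfib2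
  have hu₂ : u₂ ∈ fib := Finset.mem_of_mem_erase hu₂e
  have hu₃ : u₃ ∈ fib := Finset.mem_of_mem_erase hu₃e
  have hu₄ : u₄ ∈ fib := Finset.mem_of_mem_erase hu₄e
  have h12 : u₁ ≠ u₂ := fun h => (Finset.mem_erase.mp hu₂e).1 h.symm
  have h13 : u₁ ≠ u₃ := fun h => (Finset.mem_erase.mp hu₃e).1 h.symm
  have h14 : u₁ ≠ u₄ := fun h => (Finset.mem_erase.mp hu₄e).1 h.symm
  have hij : i₀ ≠ j₀ := (hfact u₁ hu₁).2.1
  have habne : c i₀ ≠ c j₀ := by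
    intro h
    exact hij (Fin.ext (by rw [← hcval i₀, ← hcval j₀, h]))
  have hposab : L.pos (c i₀) ≠ L.pos (c j₀) := fun h => habne (L.inj h)
  -- order the two clique endpoints
  obtain ⟨A, B, hAB, hAk, hBk, hpg⟩ :
      ∃ A B : Fin (k + m), L.pos A < L.pos B ∧ A.val < k ∧ B.val < k ∧
        ∀ u ∈ fib, L.page s(u, A) = p₀ ∧ L.page s(u, B) = p₀ := by
    rcases hposab.lt_or_gt with h | h
    · exact ⟨c i₀, c j₀, h, by rw [hcval]; exact i₀.isLt, by rw [hcval]; exact j₀.isLt,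
        fun u hu => ⟨(hfact u hu).2.2.1, (hfact u hu).2.2.2⟩⟩
    · exact ⟨c j₀, c i₀, h, by rw [hcval]; exact j₀.isLt, by rw [hcval]; exact i₀.isLt,
        fun u hu => ⟨(hfact u hu).2.2.2, (hfact u hu).2.2.1⟩⟩
  -- regions
  set r : Fin (k + m) → ℕ :=
    fun u => if L.pos u < L.pos A then 0 else if L.pos u < L.pos B then 1 else 2 with hr
  have hrle : ∀ u, r u ≤ 2 := by
    intro u; rw [hr]; dsimp only; split_ifs <;> omega
  have hpick : ∃ w₁ w₂, w₁ ∈ fib ∧ w₂ ∈ fib ∧ w₁ ≠ w₂ ∧ r w₁ = r w₂ := by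
    have q1 := hrle u₁
    have q2 := hrle u₂
    have q3 := hrle u₃
    have q4 := hrle u₄
    have hd : r u₁ = r u₂ ∨ r u₁ = r u₃ ∨ r u₁ = r u₄ ∨ r u₂ = r u₃ ∨
        r u₂ = r u₄ ∨ r u₃ = r u₄ := by omega
    rcases hd with h | h | h | h | h | h
    · exact ⟨u₁, u₂, hu₁, hu₂, h12, h⟩
    · exact ⟨u₁, u₃, hu₁, hu₃, h13, h⟩
    · exact ⟨u₁, u₄, hu₁, hu₄, h14, h⟩
    · exact ⟨u₂, u₃, hu₂, hu₃, h23, h⟩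
    · exact ⟨u₂, u₄, hu₂, hu₄, h24, h⟩
    · exact ⟨u₃, u₄, hu₃, hu₄, h34, h⟩
  obtain ⟨w₁, w₂, hw₁, hw₂, hwne, hreq⟩ := hpick
  have hw₁k : k ≤ w₁.val := (hfact w₁ hw₁).1
  have hw₂k : k ≤ w₂.val := (hfact w₂ hw₂).1
  have hne' : ∀ w : Fin (k + m), k ≤ w.val → L.pos w ≠ L.pos A ∧ L.pos w ≠ L.pos B := by
    intro w hw
    constructor
    · intro h
      have h2 := congrArg Fin.val (L.inj h)
      omega
    · intro h
      have h2 := congrArg Fin.val (L.inj h)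
      omega
  have hwpos : L.pos w₁ ≠ L.pos w₂ := fun h => hwne (L.inj h)
  have hreq' : (if L.pos w₁ < L.pos A then (0 : ℕ) else if L.pos w₁ < L.pos B then 1 else 2) =
      (if L.pos w₂ < L.pos A then (0 : ℕ) else if L.pos w₂ < L.pos B then 1 else 2) := by
    rw [hr] at hreq
    exact hreq
  have hdisj := sameRegionDisj hAB (hne' w₁ hw₁k).1 (hne' w₁ hw₁k).2
    (hne' w₂ hw₂k).1 (hne' w₂ hw₂k).2 hreq'
  obtain ⟨u', w', p, q, hu', hw', hp, hq, hcross⟩ :=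
    cross_pair L.pos A B w₁ w₂ hAB hwpos hdisj
  have hu'fib : u' ∈ fib := by rcases hu' with rfl | rfl; exacts [hw₁, hw₂]
  have hw'fib : w' ∈ fib := by rcases hw' with rfl | rfl; exacts [hw₁, hw₂]
  have hu'k : k ≤ u'.val := (hfact _ hu'fib).1
  have hw'k : k ≤ w'.val := (hfact _ hw'fib).1
  have hpk : p.val < k := by rcases hp with rfl | rfl; exacts [hAk, hBk]
  have hqk : q.val < k := by rcases hq with rfl | rfl; exacts [hAk, hBk]
  have he₁ : s(u', p) ∈ (KT k m).edgeSet := by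
    rw [SimpleGraph.mem_edgeSet, KT_adj]
    exact ⟨fun h => by have := congrArg Fin.val h; omega, Or.inr hpk⟩
  have he₂ : s(w', q) ∈ (KT k m).edgeSet := by
    rw [SimpleGraph.mem_edgeSet, KT_adj]
    exact ⟨fun h => by have := congrArg Fin.val h; omega, Or.inr hqk⟩
  have hpage₁ : L.page s(u', p) = p₀ := by
    rcases hp with rfl | rfl
    exacts [(hpg u' hu'fib).1, (hpg u' hu'fib).2]
  have hpage₂ : L.page s(w', q) = p₀ := by
    rcases hq with rfl | rfl
    exacts [(hpg w' hw'fib).1, (hpg w' hw'fib).2]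
  -- reachability inside page p₀
  have hadjA : (L.pageGraph p₀).Adj A u' := by
    rw [LinearEmbedding.pageGraph, SimpleGraph.fromEdgeSet_adj]
    refine ⟨⟨?_, ?_⟩, ?_⟩
    · rw [SimpleGraph.mem_edgeSet, KT_adj]
      exact ⟨fun h => by have := congrArg Fin.val h; omega, Or.inl hAk⟩
    · rw [Sym2.eq_swap]
      exact (hpg u' hu'fib).1
    · intro h
      have := congrArg Fin.val h
      omega
  have hadjB : (L.pageGraph p₀).Adj B u' := by
    rw [LinearEmbedding.pageGraph, SimpleGraph.fromEdgeSet_adj]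
    refine ⟨⟨?_, ?_⟩, ?_⟩
    · rw [SimpleGraph.mem_edgeSet, KT_adj]
      exact ⟨fun h => by have := congrArg Fin.val h; omega, Or.inl hBk⟩
    · rw [Sym2.eq_swap]
      exact (hpg u' hu'fib).2
    · intro h
      have := congrArg Fin.val h
      omega
  have hreachAB : (L.pageGraph p₀).Reachable A B :=
    hadjA.reachable.trans hadjB.reachable.symm
  have hreach : (L.pageGraph p₀).Reachable p q := by
    rcases hp with rfl | rfl <;> rcases hq with rfl | rfl
    · exact SimpleGraph.Reachable.refl _
    · exact hreachAB
    · exact hreachAB.symm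
    · exact SimpleGraph.Reachable.refl _
  exact hU s(u', p) he₁ s(w', q) he₂ (by rw [hpage₁, hpage₂])
    ⟨p, q, by simp, by simp, by rw [hpage₁]; exact hreach⟩ hcross

end CorePn

section WitnessPn

private lemma exists_trivial_embedding (N : ℕ) (G : SimpleGraph (Fin N)) :
    ∃ j : ℕ, (∃ L : LinearEmbedding G, L.IsBook ∧ L.IsLocal j) ∧
      (∃ L : LinearEmbedding G, L.IsUnion ∧ L.pageCount ≤ j) := by
  classical
  set eqv := Fintype.equivFin (Sym2 (Fin N)) with heqv
  set L : LinearEmbedding G :=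
    ⟨Fin.val, Fin.val_injective, fun e => (eqv e).val⟩ with hL
  have hpinj : Function.Injective L.page := by
    intro e₁ e₂ h
    exact eqv.injective (Fin.ext h)
  have hbook : L.IsBook := by
    intro e₁ h₁ e₂ h₂ hp
    have he : e₁ = e₂ := hpinj hp
    subst he
    exact not_crosses_self e₁
  have hrange : (Set.range L.page).ncard ≤ Fintype.card (Sym2 (Fin N)) := by
    rw [← Set.image_univ]
    refine le_trans (Set.ncard_image_le Set.finite_univ) ?_
    rw [Set.ncard_univ, Nat.card_eq_fintype_card]
  refine ⟨Fintype.card (Sym2 (Fin N)), ⟨L, hbook, ?_⟩, ⟨L, ?_, ?_⟩⟩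
  · intro v
    refine le_trans (Set.ncard_le_ncard ?_ (Set.finite_range L.page)) hrange
    rintro i ⟨e, -, -, h⟩
    exact ⟨e, h⟩
  · intro e₁ h₁ e₂ h₂ hp _
    have he : e₁ = e₂ := hpinj hp
    subst he
    exact not_crosses_self e₁
  · refine le_trans (Set.ncard_le_ncard ?_ (Set.finite_range L.page)) hrange
    rintro i ⟨e, -, h⟩
    exact ⟨e, h⟩

end WitnessPn

/-- for every `k ≥ 1` there is a graph of tree-width `k`
(namely a `k`-tree) with local page number at least `k`, hence union page
number at least `k`. -/
theorem exists_kTree_pnLoc_ge (k : ℕ) (hk : 1 ≤ k) :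
    ∃ (n : ℕ) (G : SimpleGraph (Fin n)), IsKTree k G Finset.univ ∧
      k ≤ pnLoc G ∧ k ≤ pnUnion G := by
  refine ⟨k + (3 * k ^ 4 + 1), KT k (3 * k ^ 4 + 1), KT_isKTree k _ (by omega), ?_, ?_⟩
  · obtain ⟨j, hjb, -⟩ := exists_trivial_embedding _ (KT k (3 * k ^ 4 + 1))
    refine le_csInf ⟨j, hjb⟩ ?_
    rintro b ⟨L, hbook, hlocb⟩
    by_contra hlt
    push_neg at hlt
    refine core_contradiction hk (by omega) L
      (fun e₁ h₁ e₂ h₂ hp _ => hbook e₁ h₁ e₂ h₂ hp) (fun v => ?_)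
    exact le_trans (hlocb v) (by omega)
  · obtain ⟨j, -, hju⟩ := exists_trivial_embedding _ (KT k (3 * k ^ 4 + 1))
    refine le_csInf ⟨j, hju⟩ ?_
    rintro b ⟨L, hun, hpc⟩
    by_contra hlt
    push_neg at hlt
    refine core_contradiction hk (by omega) L hun (fun v => ?_)
    have hsub : L.pagesAt v ⊆ L.pages := by
      rintro i ⟨e, he, -, hp⟩
      exact ⟨e, he, hp⟩
    have := Set.ncard_le_ncard hsub (pages_finite L)
    have h2 : L.pageCount ≤ b := hpc
    unfold LinearEmbedding.pageCount at h2
    omega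
end

section
/- In the unique proper (k+1)-coloring of a k-tree G, every pair of distinct color classes induces a tree in G, every vertex lies in exactly k of these k(k+1)/2 trees, and every (k+1)-clique of G has its k(k+1)/2 edges in pairwise distinct trees. -/
open SimpleGraph

section Aux

variable {V : Type*}

open SimpleGraph Walk

/-- The bicolored subgraph of `G` consisting of edges with color pair `{i, j}`. -/
def bic {k : ℕ} (G : SimpleGraph V) (φ : V → Fin (k + 1)) (i j : Fin (k + 1)) :
    SimpleGraph V where
  Adj a b := G.Adj a b ∧ s(φ a, φ b) = s(i, j)
  symm := by
    constructor
    rintro a b ⟨h1, h2⟩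
    exact ⟨h1.symm, by rwa [Sym2.eq_swap]⟩
  loopless := ⟨fun a h => G.loopless.irrefl a h.1⟩

lemma bic_mono {k : ℕ} {G G' : SimpleGraph V} (h : G ≤ G') (φ : V → Fin (k + 1))
    (i j : Fin (k + 1)) : bic G φ i j ≤ bic G' φ i j := by
  intro a b hab
  exact ⟨h hab.1, hab.2⟩

/-- If `a` has at most one neighbor, no cycle passes through `a`. -/
lemma no_cycle_through [DecidableEq V] {H : SimpleGraph V} {a : V}
    (hu : ∀ x y, H.Adj a x → H.Adj a y → x = y) {b : V} (c : H.Walk b b)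
    (hc : c.IsCycle) : a ∉ c.support := by
  intro ha
  have hc' : (c.rotate a ha).IsCycle := hc.rotate ha
  generalize hrot : c.rotate a ha = c' at hc'
  cases c' with
  | nil => exact hc'.ne_nil rfl
  | cons h q =>
    rename_i x
    have hax : a ≠ x := h.ne
    obtain ⟨y, hy, q₂, hq2⟩ := Walk.exists_eq_cons_of_ne hax q.reverse
    have hyx : y = x := hu y x hy h
    subst hyx
    have hmem : s(a, y) ∈ q.reverse.edges := by
      rw [hq2, Walk.edges_cons]; exact List.mem_cons_self
    have hmem' : s(a, y) ∈ q.edges := by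
      rwa [Walk.edges_reverse, List.mem_reverse] at hmem
    have hnd := hc'.edges_nodup
    rw [Walk.edges_cons] at hnd
    exact (List.nodup_cons.1 hnd).1 hmem'

lemma walk_induce {k : ℕ} {G : SimpleGraph V} {φ : V → Fin (k + 1)} {i j : Fin (k + 1)}
    {S : Set V} (hS : ∀ x, (φ x = i ∨ φ x = j) → x ∈ S) :
    ∀ {a b : V} (_ : (bic G φ i j).Walk a b) (ha : a ∈ S) (hb : b ∈ S),
      (G.induce S).Reachable ⟨a, ha⟩ ⟨b, hb⟩ := by
  intro a b p
  induction p with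
  | nil => intro ha hb; exact Reachable.refl _
  | @cons u x w h p ih =>
    intro ha hb
    have hx : x ∈ S := by
      refine hS x ?_
      rcases Sym2.eq_iff.1 h.2 with ⟨_, h2⟩ | ⟨_, h2⟩
      · exact Or.inr h2
      · exact Or.inl h2
    exact (SimpleGraph.Adj.reachable
      (show (G.induce S).Adj ⟨u, ha⟩ ⟨x, hx⟩ from h.1)).trans (ih hx hb)

lemma ktree_main [DecidableEq V] {k : ℕ} {G : SimpleGraph V} {s : Finset V}
    (hG : IsKTree k G s) :
    (∀ a b, G.Adj a b → a ∈ s ∧ b ∈ s) ∧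
    ∀ (φ : V → Fin (k + 1)), (∀ ⦃u v⦄, G.Adj u v → φ u ≠ φ v) →
      (∀ i : Fin (k + 1), ∃ u ∈ s, φ u = i) ∧
      ∀ i j : Fin (k + 1), i ≠ j →
        (∀ u ∈ s, ∀ w ∈ s, (φ u = i ∨ φ u = j) → (φ w = i ∨ φ w = j) →
          (bic G φ i j).Reachable u w) ∧
        (bic G φ i j).IsAcyclic := by
  induction hG with
  | base G s hcard hadj =>
    refine ⟨fun a b hab => ⟨((hadj a b).1 hab).1, ((hadj a b).1 hab).2.1⟩, ?_⟩
    intro φ hφ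
    have hinj : Set.InjOn φ ↑s := by
      intro x hx y hy hxy
      by_contra hne
      exact hφ ((hadj x y).2 ⟨hx, hy, hne⟩) hxy
    have himg : Finset.image φ s = Finset.univ := by
      apply Finset.eq_univ_of_card
      rw [Finset.card_image_of_injOn hinj, hcard, Fintype.card_fin]
    have hcol : ∀ i : Fin (k + 1), ∃ u ∈ s, φ u = i := by
      intro i
      have : i ∈ Finset.image φ s := himg ▸ Finset.mem_univ i
      obtain ⟨u, hu, hu'⟩ := Finset.mem_image.1 this
      exact ⟨u, hu, hu'⟩
    refine ⟨hcol, ?_⟩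
    intro i j hij
    constructor
    · intro u hu w hw hcu hcw
      by_cases h : φ u = φ w
      · have : u = w := hinj hu hw h
        subst this; exact Reachable.refl _
      · have hadjuw : G.Adj u w := (hadj u w).2 ⟨hu, hw, fun he => h (he ▸ rfl)⟩
        have hcolr : s(φ u, φ w) = s(i, j) := by
          rcases hcu with h1 | h1 <;> rcases hcw with h2 | h2 <;>
            simp_all [Sym2.eq_swap]
        exact SimpleGraph.Adj.reachable ⟨hadjuw, hcolr⟩
    · intro b cwalk hcyc
      have hu : ∀ x y, (bic G φ i j).Adj b x → (bic G φ i j).Adj b y → x = y := by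
        rintro x y ⟨hx1, hx2⟩ ⟨hy1, hy2⟩
        have hxy : φ x = φ y := by
          rcases Sym2.eq_iff.1 hx2 with ⟨h4, h5⟩ | ⟨h4, h5⟩ <;>
            rcases Sym2.eq_iff.1 hy2 with ⟨h6, h7⟩ | ⟨h6, h7⟩ <;> simp_all
        exact hinj (Finset.mem_coe.2 ((hadj b x).1 hx1).2.1)
          (Finset.mem_coe.2 ((hadj b y).1 hy1).2.1) hxy
      exact no_cycle_through hu cwalk hcyc cwalk.start_mem_support
  | extend G G' s c v hGk hv hc hcard hclique hG' ih =>
    obtain ⟨hE, hIH⟩ := ih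
    have hle : G ≤ G' := fun {a b} hab => (hG' a b).2 (Or.inl hab)
    refine ⟨?_, ?_⟩
    · intro a b hab
      rcases (hG' a b).1 hab with h | ⟨rfl, hbc⟩ | ⟨rfl, hac⟩
      · exact ⟨Finset.mem_insert_of_mem (hE a b h).1,
          Finset.mem_insert_of_mem (hE a b h).2⟩
      · exact ⟨Finset.mem_insert_self _ _, Finset.mem_insert_of_mem (hc hbc)⟩
      · exact ⟨Finset.mem_insert_of_mem (hc hac), Finset.mem_insert_self _ _⟩
    intro φ hφ'
    have hφ : ∀ ⦃u w⦄, G.Adj u w → φ u ≠ φ w := fun u w h => hφ' (hle h)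
    obtain ⟨hcol, hpair⟩ := hIH φ hφ
    have hvc : ∀ x ∈ c, G'.Adj v x := fun x hx => (hG' v x).2 (Or.inr (Or.inl ⟨rfl, hx⟩))
    have hφv : ∀ x ∈ c, φ v ≠ φ x := fun x hx => hφ' (hvc x hx)
    have hinjc : Set.InjOn φ ↑c := by
      intro x hx y hy hxy
      by_contra hne
      exact hφ (hclique x hx y hy hne) hxy
    have himg : Finset.image φ c = Finset.univ.erase (φ v) := by
      apply Finset.eq_of_subset_of_card_le
      · intro m hm
        obtain ⟨x, hx, rfl⟩ := Finset.mem_image.1 hm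
        exact Finset.mem_erase.2 ⟨fun h => hφv x hx h.symm, Finset.mem_univ _⟩
      · rw [Finset.card_erase_of_mem (Finset.mem_univ _), Finset.card_univ,
          Fintype.card_fin, Finset.card_image_of_injOn hinjc, hcard]
        omega
    have hex : ∀ m : Fin (k + 1), m ≠ φ v → ∃ x ∈ c, φ x = m := by
      intro m hm
      have : m ∈ Finset.image φ c :=
        himg ▸ Finset.mem_erase.2 ⟨hm, Finset.mem_univ m⟩
      obtain ⟨x, hx, hx'⟩ := Finset.mem_image.1 this
      exact ⟨x, hx, hx'⟩
    refine ⟨fun m => (hcol m).imp fun u hu => ⟨Finset.mem_insert_of_mem hu.1, hu.2⟩, ?_⟩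
    intro i j hij
    obtain ⟨hreach, hacyc⟩ := hpair i j hij
    have hmono := bic_mono hle φ i j
    have huniq : ∀ x y, (bic G' φ i j).Adj v x → (bic G' φ i j).Adj v y → x = y := by
      have hnb : ∀ x, (bic G' φ i j).Adj v x → x ∈ c := by
        rintro x ⟨hadj, _⟩
        rcases (hG' v x).1 hadj with h | ⟨_, hx⟩ | ⟨rfl, hvc'⟩
        · exact absurd (hE v x h).1 hv
        · exact hx
        · exact absurd (hc hvc') hv
      intro x y hx hy
      have hcx := hnb x hx
      have hcy := hnb y hy
      have hxy : φ x = φ y := by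
        have h2 := hx.2
        have h3 := hy.2
        rcases Sym2.eq_iff.1 h2 with ⟨h4, h5⟩ | ⟨h4, h5⟩ <;>
          rcases Sym2.eq_iff.1 h3 with ⟨h6, h7⟩ | ⟨h6, h7⟩ <;> simp_all
      exact hinjc (Finset.mem_coe.2 hcx) (Finset.mem_coe.2 hcy) hxy
    constructor
    · -- reachability
      have hvstep : (φ v = i ∨ φ v = j) →
          ∃ x ∈ s, (φ x = i ∨ φ x = j) ∧ (bic G' φ i j).Adj v x := by
        rintro (hvi | hvj)
        · obtain ⟨x, hx, hx'⟩ := hex j (fun h => hij (hvi ▸ h).symm)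
          exact ⟨x, hc hx, Or.inr hx', hvc x hx, by rw [hvi, hx']⟩
        · obtain ⟨x, hx, hx'⟩ := hex i (fun h => hij (hvj ▸ h))
          exact ⟨x, hc hx, Or.inl hx', hvc x hx, by rw [hvj, hx', Sym2.eq_swap]⟩
      have hsreach : ∀ u ∈ s, ∀ w ∈ s, (φ u = i ∨ φ u = j) → (φ w = i ∨ φ w = j) →
          (bic G' φ i j).Reachable u w := fun u hu w hw h1 h2 =>
        (hreach u hu w hw h1 h2).mono hmono
      intro u hu w hw hcu hcw
      rcases Finset.mem_insert.1 hu with hu1 | hu' <;>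
        rcases Finset.mem_insert.1 hw with hw1 | hw'
      · subst hu1; subst hw1; exact Reachable.refl _
      · subst hu1
        obtain ⟨x, hx, hxc, hxadj⟩ := hvstep hcu
        exact (SimpleGraph.Adj.reachable hxadj).trans (hsreach x hx w hw' hxc hcw)
      · subst hw1
        obtain ⟨x, hx, hxc, hxadj⟩ := hvstep hcw
        exact ((SimpleGraph.Adj.reachable hxadj).trans
          (hsreach x hx u hu' hxc hcu)).symm
      · exact hsreach u hu' w hw' hcu hcw
    · -- acyclicity
      intro b w hw
      have hvs : v ∉ w.support := no_cycle_through huniq w hw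
      have hedges : ∀ e ∈ w.edges, e ∈ (bic G φ i j).edgeSet := by
        intro e he
        have heG' := w.edges_subset_edgeSet he
        revert he heG'
        refine Sym2.inductionOn e ?_
        intro a b he heG'
        have ha : a ∈ w.support := w.fst_mem_support_of_mem_edges he
        have hb : b ∈ w.support := w.snd_mem_support_of_mem_edges he
        have hav : a ≠ v := fun h => hvs (h ▸ ha)
        have hbv : b ≠ v := fun h => hvs (h ▸ hb)
        rw [SimpleGraph.mem_edgeSet] at heG' ⊢
        rcases (hG' a b).1 heG'.1 with h | ⟨h1, _⟩ | ⟨h1, _⟩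
        · exact ⟨h, heG'.2⟩
        · exact absurd h1 hav
        · exact absurd h1 hbv
      exact hacyc (w.transfer _ hedges) (hw.transfer hedges)

lemma pairs_count (k : ℕ) (c : Fin (k + 1)) :
    {p : Sym2 (Fin (k + 1)) | ¬ p.IsDiag ∧ c ∈ p}.ncard = k := by
  have hset : {p : Sym2 (Fin (k + 1)) | ¬ p.IsDiag ∧ c ∈ p} =
      (fun d => s(c, d)) '' {d | d ≠ c} := by
    ext p
    constructor
    · refine Sym2.inductionOn p ?_
      rintro a b ⟨hd, hm⟩
      rw [Sym2.mk_isDiag_iff] at hd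
      rcases Sym2.mem_iff.1 hm with rfl | rfl
      · exact ⟨b, fun h => hd h.symm, rfl⟩
      · exact ⟨a, hd, by rw [Sym2.eq_swap]⟩
    · rintro ⟨d, hd, rfl⟩
      exact ⟨by rwa [Sym2.mk_isDiag_iff, eq_comm, ← ne_eq], Sym2.mem_mk_left _ _⟩
  rw [hset, Set.ncard_image_of_injOn]
  · have : {d : Fin (k + 1) | d ≠ c} = ↑(Finset.univ.erase c) := by
      ext d; simp [Finset.mem_erase]
    rw [this, Set.ncard_coe_finset, Finset.card_erase_of_mem (Finset.mem_univ _),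
      Finset.card_univ, Fintype.card_fin]
    omega
  · intro d hd d' hd' h
    rcases Sym2.eq_iff.1 h with ⟨_, h2⟩ | ⟨h1, _⟩
    · exact h2
    · exact absurd h1.symm hd'

end Aux

/-- for the (unique) proper `(k+1)`-coloring `φ` of a `k`-tree `G`:
every pair of distinct color classes induces a tree, every vertex lies in exactly
`k` of these `k(k+1)/2` trees, and every `(k+1)`-clique has all its edges in
pairwise distinct trees. -/
theorem kTree_coloring_tree_decomposition {V : Type*} [Fintype V] [DecidableEq V]
    (k : ℕ) (G : SimpleGraph V) (hG : IsKTree k G Finset.univ)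
    (φ : V → Fin (k + 1)) (hφ : ∀ ⦃u v⦄, G.Adj u v → φ u ≠ φ v) :
    (∀ i j : Fin (k + 1), i ≠ j →
        (G.induce {v | φ v = i ∨ φ v = j}).IsTree) ∧
    (∀ v : V, {p : Sym2 (Fin (k + 1)) | ¬ p.IsDiag ∧ φ v ∈ p}.ncard = k) ∧
    (∀ s : Finset V, G.IsNClique (k + 1) s →
      ∀ e₁ ∈ G.edgeSet, ∀ e₂ ∈ G.edgeSet,
        (∀ x ∈ e₁, x ∈ s) → (∀ x ∈ e₂, x ∈ s) →
        Sym2.map φ e₁ = Sym2.map φ e₂ → e₁ = e₂) := by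
  obtain ⟨hE, hmain⟩ := ktree_main hG
  obtain ⟨hcol, hpair⟩ := hmain φ hφ
  refine ⟨?_, fun v => pairs_count k (φ v), ?_⟩
  · intro i j hij
    obtain ⟨hreach, hacyc⟩ := hpair i j hij
    have hcolor : ∀ {a b : V}, G.Adj a b → (φ a = i ∨ φ a = j) → (φ b = i ∨ φ b = j) →
        s(φ a, φ b) = s(i, j) := by
      rintro a b hab (ha | ha) (hb | hb)
      · exact absurd (ha.trans hb.symm) (hφ hab)
      · rw [ha, hb]
      · rw [ha, hb, Sym2.eq_swap]
      · exact absurd (ha.trans hb.symm) (hφ hab)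
    constructor
    · -- connected
      have hne : Nonempty {v : V | φ v = i ∨ φ v = j} := by
        obtain ⟨u, _, hu⟩ := hcol i
        exact ⟨⟨u, Or.inl hu⟩⟩
      refine SimpleGraph.Connected.mk ?_
      rintro ⟨x, hx⟩ ⟨y, hy⟩
      obtain ⟨p⟩ := hreach x (Finset.mem_univ x) y (Finset.mem_univ y) hx hy
      exact walk_induce (fun z hz => hz) p hx hy
    · -- acyclic
      intro x p hp
      let f : G.induce {v : V | φ v = i ∨ φ v = j} →g bic G φ i j :=
        ⟨Subtype.val, fun {a b} h => ⟨h, hcolor h a.2 b.2⟩⟩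
      exact hacyc (p.map f) (hp.map Subtype.val_injective)
  · intro s hs e₁ he₁ e₂ he₂ h₁ h₂ hmap
    have hinj : Set.InjOn φ ↑s := by
      intro x hx y hy hxy
      by_contra hne
      exact hφ (hs.1 hx hy hne) hxy
    revert he₁ h₁ hmap
    refine Sym2.inductionOn e₁ ?_
    intro a b he₁ h₁ hmap
    revert he₂ h₂ hmap
    refine Sym2.inductionOn e₂ ?_
    intro x y he₂ h₂ hmap
    have ha : a ∈ s := h₁ a (Sym2.mem_mk_left _ _)
    have hb : b ∈ s := h₁ b (Sym2.mem_mk_right _ _)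
    have hx : x ∈ s := h₂ x (Sym2.mem_mk_left _ _)
    have hy : y ∈ s := h₂ y (Sym2.mem_mk_right _ _)
    rw [Sym2.map_pair_eq, Sym2.map_pair_eq] at hmap
    rcases Sym2.eq_iff.1 hmap with ⟨h3, h4⟩ | ⟨h3, h4⟩
    · rw [hinj ha hx h3, hinj hb hy h4]
    · rw [hinj ha hy h3, hinj hb hx h4, Sym2.eq_swap]
end
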